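/- Let q be a prime power and w ∈ F_q with w ≠ 0. Set h = (X³ − 3w²X + w³)/(X(X − w)), viewed as a map h : P¹(F_q) → P¹(F_q). Then the number of points b ∈ P¹(F_q) whose fiber h⁻¹(b) has exactly 3 elements equals: q/3 if q ≡ 0 (mod 3); (q−1)/3 if q ≡ 1 (mod 3); and (q+1)/3 if q ≡ 2 (mod 3). In particular, h is (2, l)-good with l = q/3, (q−1)/3, (q+1)/3 in the respective cases. -/

import Mathlib

open Polynomial Finset

/-- The map `P¹(F) → P¹(F)` induced by the rational function `f/g`
(with `none` playing the role of `∞`). -/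
def ratEval {F : Type*} [Field F] [DecidableEq F] (f g : Polynomial F) :
    Option F → Option F
  | none =>
      if g.natDegree < f.natDegree then none
      else if f.natDegree = g.natDegree then some (f.leadingCoeff / g.leadingCoeff)
      else some 0
  | some x => if g.eval x = 0 then none else some (f.eval x / g.eval x)

section Aux

variable {F : Type*} [Field F] [DecidableEq F]

noncomputable def hmap (w : F) : Option F → Option F :=
  ratEval (X ^ 3 - C (3 * w ^ 2) * X + C (w ^ 3)) (X * (X - C w))

def sig (w : F) : Option F → Option F
  | none => some w
  | some x => if x = 0 then none else some (w - w ^ 2 / x)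

lemma hmap_none (w : F) : hmap w none = none := by
  have h1 : (X ^ 3 - C (3 * w ^ 2) * X + C (w ^ 3) : F[X]).natDegree = 3 := by compute_degree!
  have h2 : (X * (X - C w) : F[X]).natDegree = 2 := by compute_degree!
  simp only [hmap, ratEval, h1, h2]
  norm_num

lemma hmap_some (w x : F) : hmap w (some x) =
    if x * (x - w) = 0 then none else some ((x ^ 3 - 3 * w ^ 2 * x + w ^ 3) / (x * (x - w))) := by
  simp [hmap, ratEval]

section
variable {w x : F} (hw : w ≠ 0) (h0 : x ≠ 0) (hxw : x ≠ w)
include hw h0 hxw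

lemma sig_step1 : sig w (some x) = some (w * (x - w) / x) := by
  have hy : w - w ^ 2 / x = w * (x - w) / x := by field_simp
  simp [sig, h0, hy]

lemma sig_step2 : sig w (some (w * (x - w) / x)) = some (-w ^ 2 / (x - w)) := by
  have hxw' : x - w ≠ 0 := sub_ne_zero.mpr hxw
  have hyne : w * (x - w) / x ≠ 0 := div_ne_zero (mul_ne_zero hw hxw') h0
  have hz : w - w ^ 2 / (w * (x - w) / x) = -w ^ 2 / (x - w) := by
    field_simp
    ring
  simp [sig, hyne, hz]

lemma sig_step3 : sig w (some (-w ^ 2 / (x - w))) = some x := by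
  have hxw' : x - w ≠ 0 := sub_ne_zero.mpr hxw
  have hzne : -w ^ 2 / (x - w) ≠ 0 :=
    div_ne_zero (neg_ne_zero.mpr (pow_ne_zero _ hw)) hxw'
  have hfin : w - w ^ 2 / (-w ^ 2 / (x - w)) = x := by
    field_simp
    ring
  simp [sig, hzne, hfin]

end

lemma sig_sig_sig (w : F) (hw : w ≠ 0) (x : Option F) : sig w (sig w (sig w x)) = x := by
  have hw0 : w - w ^ 2 / w = 0 := by field_simp; ring
  obtain _ | x := x
  · simp [sig, hw, hw0]
  · by_cases h0 : x = 0
    · simp [sig, h0, hw, hw0]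
    · by_cases hxw : x = w
      · subst hxw
        simp [sig, hw, h0, hw0]
      · rw [sig_step1 hw h0 hxw, sig_step2 hw h0 hxw, sig_step3 hw h0 hxw]

lemma hmap_sig (w : F) (hw : w ≠ 0) (x : Option F) : hmap w (sig w x) = hmap w x := by
  obtain _ | x := x
  · show hmap w (some w) = _
    rw [hmap_none, hmap_some]
    simp
  · by_cases h0 : x = 0
    · subst h0
      have e : sig w (some 0) = none := by simp [sig]
      rw [e, hmap_none, hmap_some]
      simp
    · by_cases hxw : x = w
      · have hw0 : w - w ^ 2 / w = 0 := by field_simp; ring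
        have e : sig w (some x) = some 0 := by simp [sig, hxw, hw, hw0]
        rw [e, hmap_some, hmap_some, hxw]
        simp
      · rw [sig_step1 hw h0 hxw]
        have hxw' : x - w ≠ 0 := sub_ne_zero.mpr hxw
        have hyne : w * (x - w) / x ≠ 0 := div_ne_zero (mul_ne_zero hw hxw') h0
        have hywne : w * (x - w) / x - w ≠ 0 := by
          rw [sub_ne_zero]
          intro h
          rw [div_eq_iff h0] at h
          apply hw
          have : -(w * w) = 0 := by linear_combination h
          have := neg_eq_zero.mp this
          exact (mul_self_eq_zero.mp this)
        rw [hmap_some, hmap_some,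
          if_neg (mul_ne_zero hyne (sub_ne_zero.mpr (fun h => hywne (sub_eq_zero.mpr h)))),
          if_neg (mul_ne_zero h0 hxw')]
        congr 1
        rw [div_eq_div_iff (mul_ne_zero hyne hywne) (mul_ne_zero h0 hxw')]
        field_simp
        ring

lemma hmap_eq_none_iff (w : F) (x : Option F) :
    hmap w x = none ↔ x = none ∨ x = some 0 ∨ x = some w := by
  obtain _ | t := x
  · simp [hmap_none]
  · rw [hmap_some]
    by_cases hd : t * (t - w) = 0
    · rcases mul_eq_zero.mp hd with h | h
      · simp [hd, h]
      · simp [hd, sub_eq_zero.mp h]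
    · have h1 : t ≠ 0 := fun h => hd (by rw [h]; ring)
      have h2 : t ≠ w := fun h => hd (by rw [h]; ring)
      simp [hd, h1, h2]

lemma sig_fixed_iff (w : F) (hw : w ≠ 0) (x : Option F) :
    sig w x = x ↔ ∃ t : F, x = some t ∧ t ^ 2 - w * t + w ^ 2 = 0 := by
  obtain _ | t := x
  · simp [sig]
  · by_cases h0 : t = 0
    · subst h0
      simp only [sig, if_pos rfl]
      constructor
      · intro h; exact absurd h (by simp)
      · rintro ⟨s, hs, hq⟩
        obtain rfl : s = 0 := by simpa using hs.symm
        exfalso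
        apply hw
        have : w ^ 2 = 0 := by linear_combination hq
        exact pow_eq_zero_iff (n := 2) (by norm_num) |>.mp this
    · simp only [sig, if_neg h0, Option.some.injEq]
      constructor
      · intro h
        refine ⟨t, rfl, ?_⟩
        have h' : (w - w ^ 2 / t) * t = t * t := by rw [h]
        rw [sub_mul, div_mul_cancel₀ _ h0] at h'
        linear_combination -h'
      · rintro ⟨s, hs, hq⟩
        obtain rfl : s = t := by simpa using hs.symm
        have h' : (w - w ^ 2 / s) * s = s * s := by
          rw [sub_mul, div_mul_cancel₀ _ h0]
          linear_combination -hq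
        exact mul_right_cancel₀ h0 h'

lemma sig_inj (w : F) (hw : w ≠ 0) {a b : Option F} (h : sig w a = sig w b) : a = b := by
  have := congrArg (fun z => sig w (sig w z)) h
  simpa [sig_sig_sig w hw] using this

lemma quad_two_roots {w t s r : F} (h1 : t ^ 2 - w * t + w ^ 2 = 0)
    (h2 : s ^ 2 - w * s + w ^ 2 = 0) (h3 : r ^ 2 - w * r + w ^ 2 = 0)
    (hts : t ≠ s) (htr : t ≠ r) (hsr : s ≠ r) : False := by
  have e1 : (t - s) * (t + s - w) = 0 := by linear_combination h1 - h2
  have e2 : (t - r) * (t + r - w) = 0 := by linear_combination h1 - h3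
  have f1 : t + s - w = 0 := by
    rcases mul_eq_zero.mp e1 with h | h
    · exact absurd (sub_eq_zero.mp h) hts
    · exact h
  have f2 : t + r - w = 0 := by
    rcases mul_eq_zero.mp e2 with h | h
    · exact absurd (sub_eq_zero.mp h) htr
    · exact h
  exact hsr (by linear_combination f1 - f2)

variable [Fintype F]

lemma fiber_card_le (w : F) (hw : w ≠ 0) (b : Option F) :
    (univ.filter fun x : Option F => hmap w x = b).card ≤ 3 := by
  obtain _ | c := b
  · refine le_trans (card_le_card (fun x hx => ?_)) (card_le_three (a := (none : Option F))
      (b := some 0) (c := some w))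
    simp only [mem_filter, univ_filter_exists, mem_insert, mem_singleton] at hx ⊢
    rcases (hmap_eq_none_iff w x).mp hx.2 with h | h | h <;> simp [h]
  · set P : F[X] := X ^ 3 - C (3 * w ^ 2) * X + C (w ^ 3) - C c * (X * (X - C w)) with hPdef
    have hP : P.natDegree = 3 := by rw [hPdef]; compute_degree!
    have hP0 : P ≠ 0 := fun h => by simp [h] at hP
    have hsub : (univ.filter fun x : Option F => hmap w x = some c)
        ⊆ P.roots.toFinset.image some := by
      intro x hx
      simp only [mem_filter] at hx
      obtain _ | t := x
      · rw [hmap_none] at hx; exact absurd hx.2 (by simp)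
      · rw [hmap_some] at hx
        by_cases hd : t * (t - w) = 0
        · rw [if_pos hd] at hx; exact absurd hx.2 (by simp)
        · rw [if_neg hd] at hx
          have hx2 : (t ^ 3 - 3 * w ^ 2 * t + w ^ 3) / (t * (t - w)) = c := by
            simpa using hx.2
          rw [div_eq_iff hd] at hx2
          simp only [mem_image, Multiset.mem_toFinset]
          refine ⟨t, ?_, rfl⟩
          rw [mem_roots hP0]
          show P.eval t = 0
          rw [hPdef]
          simp only [eval_sub, eval_add, eval_mul, eval_pow, eval_X, eval_C]
          linear_combination hx2
    calc (univ.filter fun x : Option F => hmap w x = some c).card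
        ≤ (P.roots.toFinset.image some).card := card_le_card hsub
      _ ≤ P.roots.toFinset.card := card_image_le
      _ ≤ Multiset.card P.roots := P.roots.toFinset_card_le
      _ ≤ 3 := by rw [← hP]; exact P.card_roots'

lemma orbit_distinct (w : F) (hw : w ≠ 0) {x : Option F} (hne : sig w x ≠ x) :
    x ≠ sig w x ∧ x ≠ sig w (sig w x) ∧ sig w x ≠ sig w (sig w x) := by
  refine ⟨Ne.symm hne, fun h => ?_, fun h => hne (sig_inj w hw h.symm)⟩
  apply hne
  have := congrArg (sig w) h
  rw [sig_sig_sig w hw] at this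
  exact this

lemma key (w : F) (hw : w ≠ 0) (x : Option F) :
    (univ.filter fun y : Option F => hmap w y = hmap w x).card = 3 ↔ sig w x ≠ x := by
  constructor
  · intro hcard
    by_contra hfix
    set S := univ.filter fun y : Option F => hmap w y = hmap w x with hS
    have hxS : x ∈ S := by simp [hS]
    have hclosed : ∀ y ∈ S, sig w y ∈ S := by
      intro y hy
      simp only [hS, mem_filter, mem_univ, true_and] at hy ⊢
      rw [hmap_sig w hw, hy]
    have h2 : (S.erase x).card = 2 := by
      rw [card_erase_of_mem hxS, hcard]
    obtain ⟨y, z, hyz, hyz2⟩ := Finset.card_eq_two.mp h2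
    have hyS : y ∈ S := mem_of_mem_erase (hyz2 ▸ mem_insert_self y {z})
    have hzS : z ∈ S := mem_of_mem_erase (hyz2 ▸ mem_insert_of_mem (mem_singleton_self z))
    have hyx : y ≠ x := ne_of_mem_erase (hyz2 ▸ mem_insert_self y {z})
    have hzx : z ≠ x := ne_of_mem_erase (hyz2 ▸ mem_insert_of_mem (mem_singleton_self z))
    -- if some element of S is not fixed, we get 4 distinct elements in S
    have main : ∀ u ∈ S, sig w u ≠ u → False := by
      intro u huS hu
      obtain ⟨d1, d2, d3⟩ := orbit_distinct w hw hu
      have hux : u ≠ x := fun h => hu (h ▸ hfix)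
      have hsux : sig w u ≠ x := fun h => hux (sig_inj w hw (h.trans hfix.symm))
      have hssux : sig w (sig w u) ≠ x := fun h => hsux (sig_inj w hw (h.trans hfix.symm))
      have hsub : ({x, u, sig w u, sig w (sig w u)} : Finset (Option F)) ⊆ S := by
        intro v hv
        simp only [mem_insert, mem_singleton] at hv
        rcases hv with rfl | rfl | rfl | rfl
        · exact hxS
        · exact huS
        · exact hclosed u huS
        · exact hclosed _ (hclosed u huS)
      have hc4 : ({x, u, sig w u, sig w (sig w u)} : Finset (Option F)).card = 4 := by
        rw [card_insert_of_notMem (by simp [Ne.symm hux, Ne.symm hsux, Ne.symm hssux]),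
          card_insert_of_notMem (by simp [d1, d2]),
          card_insert_of_notMem (by simp [d3]), card_singleton]
      have := card_le_card hsub
      omega
    -- so x, y, z are all fixed points of sig, hence roots of the quadratic
    obtain ⟨t, rfl, hqt⟩ := (sig_fixed_iff w hw x).mp hfix
    obtain ⟨s, rfl, hqs⟩ := (sig_fixed_iff w hw y).mp (not_not.mp fun h => main y hyS h)
    obtain ⟨r, rfl, hqr⟩ := (sig_fixed_iff w hw z).mp (not_not.mp fun h => main z hzS h)
    exact quad_two_roots hqt hqs hqr (fun h => hyx (by rw [h]))
      (fun h => hzx (by rw [h])) (fun h => hyz (by rw [h]))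
  · intro hne
    obtain ⟨d1, d2, d3⟩ := orbit_distinct w hw hne
    refine le_antisymm (fiber_card_le w hw _) ?_
    have hsub : ({x, sig w x, sig w (sig w x)} : Finset (Option F))
        ⊆ univ.filter fun y : Option F => hmap w y = hmap w x := by
      intro v hv
      simp only [mem_insert, mem_singleton] at hv
      simp only [mem_filter, mem_univ, true_and]
      rcases hv with rfl | rfl | rfl
      · rfl
      · exact hmap_sig w hw x
      · rw [hmap_sig w hw, hmap_sig w hw]
    have hc3 : ({x, sig w x, sig w (sig w x)} : Finset (Option F)).card = 3 := by
      rw [card_insert_of_notMem (by simp [d1, d2]),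
        card_insert_of_notMem (by simp [d3]), card_singleton]
    calc 3 = ({x, sig w x, sig w (sig w x)} : Finset (Option F)).card := hc3.symm
      _ ≤ _ := card_le_card hsub

lemma count_eq (w : F) (hw : w ≠ 0) :
    3 * (univ.filter fun b : Option F =>
      (univ.filter fun x : Option F => hmap w x = b).card = 3).card
    = (univ.filter fun x : Option F => sig w x ≠ x).card := by
  set T := univ.filter fun b : Option F =>
      (univ.filter fun x : Option F => hmap w x = b).card = 3 with hT
  rw [Finset.card_eq_sum_card_fiberwise (f := hmap w) (t := T)
    (s := univ.filter fun x : Option F => sig w x ≠ x)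
    (fun x hx => by
      simp only [coe_filter, mem_filter, mem_univ, true_and, Set.mem_setOf_eq] at hx
      rw [hT, mem_coe, mem_filter]
      exact ⟨mem_univ _, (key w hw x).mpr hx⟩)]
  have hsum : ∀ b ∈ T, ((univ.filter fun x : Option F => sig w x ≠ x).filter
      fun x => hmap w x = b).card = 3 := by
    intro b hb
    rw [hT, mem_filter] at hb
    have hb3 := hb.2
    rw [← hb3]
    congr 1
    ext y
    simp only [mem_filter, mem_univ, true_and]
    constructor
    · rintro ⟨_, h1⟩; exact h1
    · intro h1
      refine ⟨(key w hw y).mp ?_, h1⟩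
      rw [h1, ← hb3]
  trans ∑ _b ∈ T, 3
  · rw [Finset.sum_const, smul_eq_mul, mul_comm]
  · exact (Finset.sum_congr rfl hsum).symm

lemma fixed_card (w : F) (hw : w ≠ 0) :
    (univ.filter fun x : Option F => sig w x = x).card
    = (univ.filter fun t : F => t ^ 2 - w * t + w ^ 2 = 0).card := by
  rw [← Finset.card_image_of_injective _ (Option.some_injective F)]
  congr 1
  ext x
  simp only [mem_image, mem_filter, mem_univ, true_and, sig_fixed_iff w hw]
  constructor
  · rintro ⟨t, rfl, h⟩; exact ⟨t, h, rfl⟩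
  · rintro ⟨t, h, rfl⟩; exact ⟨t, rfl, h⟩

lemma master (w : F) (hw : w ≠ 0) :
    3 * (univ.filter fun b : Option F =>
      (univ.filter fun x : Option F => hmap w x = b).card = 3).card
    + (univ.filter fun t : F => t ^ 2 - w * t + w ^ 2 = 0).card
    = Fintype.card F + 1 := by
  rw [count_eq w hw, ← fixed_card w hw]
  have h := Finset.card_filter_add_card_filter_not
    (s := (univ : Finset (Option F))) (p := fun x => sig w x = x)
  rw [Finset.card_univ, Fintype.card_option] at h
  have e : (univ.filter fun x : Option F => ¬ sig w x = x)
      = univ.filter fun x : Option F => sig w x ≠ x := rfl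
  rw [e] at h
  omega

lemma quad_card_char3 (w : F) (hw : w ≠ 0) (h3 : (3 : F) = 0) :
    (univ.filter fun t : F => t ^ 2 - w * t + w ^ 2 = 0).card = 1 := by
  convert_to ({-w} : Finset F).card = 1
  · congr 1
    ext t
    simp only [mem_filter, mem_univ, true_and, mem_singleton]
    constructor
    · intro h
      have h' : (t + w) ^ 2 = 0 := by linear_combination h + t * w * h3
      have h'' := pow_eq_zero_iff (n := 2) (by norm_num) |>.mp h'
      linear_combination h''
    · rintro rfl
      linear_combination w ^ 2 * h3
  · simp

lemma quad_card_root (w c : F) (hw : w ≠ 0) (hc1 : c ≠ 1) (hc3 : c ^ 3 = 1) :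
    (univ.filter fun t : F => t ^ 2 - w * t + w ^ 2 = 0).card = 2 := by
  have hc0 : c ≠ 0 := by rintro rfl; simp at hc3
  have hsum : c ^ 2 + c + 1 = 0 := by
    have h := mul_eq_zero.mp (show (c - 1) * (c ^ 2 + c + 1) = 0 by linear_combination hc3)
    rcases h with h | h
    · exact absurd (sub_eq_zero.mp h) hc1
    · exact h
  have hne : -(w * c) ≠ -(w * c ^ 2) := by
    intro h
    apply hc1
    have h2 : c = c ^ 2 := mul_left_cancel₀ hw (neg_injective h)
    have := mul_left_cancel₀ hc0 (show c * 1 = c * c by linear_combination h2)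
    exact this.symm
  convert_to ({-(w * c), -(w * c ^ 2)} : Finset F).card = 2
  · congr 1
    ext t
    simp only [mem_filter, mem_univ, true_and, mem_insert, mem_singleton]
    constructor
    · intro h
      have hp : (t + w * c) * (t + w * c ^ 2) = 0 := by
        linear_combination h + w * t * hsum + w ^ 2 * hc3
      rcases mul_eq_zero.mp hp with h' | h'
      · exact Or.inl (eq_neg_of_add_eq_zero_left h')
      · exact Or.inr (eq_neg_of_add_eq_zero_left h')
    · rintro (rfl | rfl)
      · linear_combination w ^ 2 * hsum
      · linear_combination w ^ 2 * c * hc3 + w ^ 2 * hsum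
  · rw [card_insert_of_notMem (by simp [hne]), card_singleton]

lemma quad_card_empty (w : F) (hw : w ≠ 0)
    (hnr : ∀ c : F, c ^ 3 = 1 → c = 1) (h3 : (3 : F) ≠ 0) :
    (univ.filter fun t : F => t ^ 2 - w * t + w ^ 2 = 0).card = 0 := by
  rw [Finset.card_eq_zero, Finset.filter_eq_empty_iff]
  intro t _
  intro h
  have ht3 : t ^ 3 = -w ^ 3 := by linear_combination (t + w) * h
  have hu : (-(t / w)) ^ 3 = 1 := by
    field_simp
    linear_combination -ht3
  have := hnr _ hu
  have htw : t = -w := by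
    have h' : -t = w := by
      field_simp at this
      linear_combination this
    linear_combination -h'
  subst htw
  apply h3
  have h'' : (3 : F) * w ^ 2 = 0 := by linear_combination h
  rcases mul_eq_zero.mp h'' with h' | h'
  · exact h'
  · exact absurd (pow_eq_zero_iff (n := 2) (by norm_num) |>.mp h') hw

lemma char_three_of_mod (h : Fintype.card F % 3 = 0) : (3 : F) = 0 := by
  obtain ⟨n, hp, hq⟩ := FiniteField.card F (ringChar F)
  have h3 : (3 : ℕ) ∣ ringChar F ^ (n : ℕ) := by
    rw [← hq]; exact Nat.dvd_of_mod_eq_zero h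
  have hd : (3 : ℕ) ∣ ringChar F := Nat.Prime.dvd_of_dvd_pow Nat.prime_three h3
  have he : ringChar F = 3 := ((Nat.prime_dvd_prime_iff_eq Nat.prime_three hp).mp hd).symm
  calc (3 : F) = ((3 : ℕ) : F) := by norm_num
    _ = 0 := by rw [← he]; exact CharP.cast_eq_zero F (ringChar F)

lemma mod_of_char_three (h : (3 : F) = 0) : Fintype.card F % 3 = 0 := by
  obtain ⟨n, hp, hq⟩ := FiniteField.card F (ringChar F)
  have hd : ringChar F ∣ 3 := by
    have := (CharP.cast_eq_zero_iff F (ringChar F) 3).mpr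
    exact (CharP.cast_eq_zero_iff F (ringChar F) 3).mp (by exact_mod_cast h)
  have he : ringChar F = 3 := (Nat.prime_dvd_prime_iff_eq hp Nat.prime_three).mp hd
  rw [hq, he]
  obtain ⟨k, hk⟩ := dvd_pow_self 3 (n := (n : ℕ)) n.pos.ne'
  omega

lemma exists_cube_root (h : Fintype.card F % 3 = 1) : ∃ c : F, c ≠ 1 ∧ c ^ 3 = 1 := by
  have hq1 : 1 ≤ Fintype.card F := Fintype.card_pos
  haveI : Fact (Nat.Prime 3) := ⟨Nat.prime_three⟩
  have hdvd : 3 ∣ Fintype.card Fˣ := by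
    rw [Fintype.card_units]; omega
  obtain ⟨ζ, hζ⟩ := exists_prime_orderOf_dvd_card 3 hdvd
  refine ⟨(ζ : F), ?_, ?_⟩
  · intro hc
    have hζ1 : ζ = 1 := Units.ext (hc.trans Units.val_one.symm)
    rw [hζ1, orderOf_one] at hζ
    norm_num at hζ
  · have h1 : ζ ^ 3 = 1 := by rw [← hζ]; exact pow_orderOf_eq_one ζ
    calc ((ζ : F)) ^ 3 = ((ζ ^ 3 : Fˣ) : F) := by rw [Units.val_pow_eq_pow_val]
      _ = 1 := by rw [h1]; rfl

lemma no_cube_root (h : Fintype.card F % 3 = 2) :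
    (∀ c : F, c ^ 3 = 1 → c = 1) ∧ (3 : F) ≠ 0 := by
  have hq1 : 1 ≤ Fintype.card F := Fintype.card_pos
  constructor
  · intro c hc3
    have hc0 : c ≠ 0 := by rintro rfl; simp at hc3
    set v : Fˣ := Units.mk0 c hc0 with hv
    have hv3 : v ^ 3 = 1 := Units.ext (by simp [hv, hc3])
    have hdvd : orderOf v ∣ 3 := orderOf_dvd_of_pow_eq_one hv3
    have hdvd2 : orderOf v ∣ Fintype.card Fˣ := orderOf_dvd_card
    rw [Fintype.card_units] at hdvd2
    rcases Nat.Prime.eq_one_or_self_of_dvd Nat.prime_three _ hdvd with h1 | h1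
    · have hv1 : v = 1 := orderOf_eq_one_iff.mp h1
      have := congrArg Units.val hv1
      simpa [hv] using this
    · rw [h1] at hdvd2
      obtain ⟨k, hk⟩ := hdvd2
      omega
  · intro h3
    have := mod_of_char_three h3
    omega

theorem stmt13' (w : F) (hw : w ≠ 0) :
    (Fintype.card F % 3 = 0 →
      (Finset.univ.filter (fun b : Option F =>
        (Finset.univ.filter (fun x : Option F =>
          ratEval (X ^ 3 - C (3 * w ^ 2) * X + C (w ^ 3)) (X * (X - C w)) x = b)).card
          = 3)).card = Fintype.card F / 3) ∧
    (Fintype.card F % 3 = 1 →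
      (Finset.univ.filter (fun b : Option F =>
        (Finset.univ.filter (fun x : Option F =>
          ratEval (X ^ 3 - C (3 * w ^ 2) * X + C (w ^ 3)) (X * (X - C w)) x = b)).card
          = 3)).card = (Fintype.card F - 1) / 3) ∧
    (Fintype.card F % 3 = 2 →
      (Finset.univ.filter (fun b : Option F =>
        (Finset.univ.filter (fun x : Option F =>
          ratEval (X ^ 3 - C (3 * w ^ 2) * X + C (w ^ 3)) (X * (X - C w)) x = b)).card
          = 3)).card = (Fintype.card F + 1) / 3) := by
  have e : ∀ x : Option F,
      ratEval (X ^ 3 - C (3 * w ^ 2) * X + C (w ^ 3)) (X * (X - C w)) x = hmap w x :=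
    fun _ => rfl
  simp only [e]
  have hq1 : 1 ≤ Fintype.card F := Fintype.card_pos
  have hM := master w hw
  refine ⟨fun h0 => ?_, fun h1 => ?_, fun h2 => ?_⟩
  · rw [quad_card_char3 w hw (char_three_of_mod h0)] at hM
    omega
  · obtain ⟨c, hc1, hc3⟩ := exists_cube_root h1
    rw [quad_card_root w c hw hc1 hc3] at hM
    omega
  · obtain ⟨hnr, h3⟩ := no_cube_root h2
    rw [quad_card_empty w hw hnr h3] at hM
    omega

end Aux

/-- Let `w ∈ F_q*` and consider `h = (X³ - 3w²X + w³)/(X(X - w))` as a map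
`P¹(F_q) → P¹(F_q)`.  The number of `b ∈ P¹(F_q)` whose fiber `h⁻¹(b)` has exactly
`3` elements equals `q/3` if `q ≡ 0 (mod 3)`, `(q-1)/3` if `q ≡ 1 (mod 3)`, and
`(q+1)/3` if `q ≡ 2 (mod 3)`; in particular `h` is `(2,l)`-good with the
corresponding `l`. -/
theorem stmt13 {F : Type*} [Field F] [Fintype F] [DecidableEq F] (w : F) (hw : w ≠ 0) :
    (Fintype.card F % 3 = 0 →
      (Finset.univ.filter (fun b : Option F =>
        (Finset.univ.filter (fun x : Option F =>
          ratEval (X ^ 3 - C (3 * w ^ 2) * X + C (w ^ 3)) (X * (X - C w)) x = b)).card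
          = 3)).card = Fintype.card F / 3) ∧
    (Fintype.card F % 3 = 1 →
      (Finset.univ.filter (fun b : Option F =>
        (Finset.univ.filter (fun x : Option F =>
          ratEval (X ^ 3 - C (3 * w ^ 2) * X + C (w ^ 3)) (X * (X - C w)) x = b)).card
          = 3)).card = (Fintype.card F - 1) / 3) ∧
    (Fintype.card F % 3 = 2 →
      (Finset.univ.filter (fun b : Option F =>
        (Finset.univ.filter (fun x : Option F =>
          ratEval (X ^ 3 - C (3 * w ^ 2) * X + C (w ^ 3)) (X * (X - C w)) x = b)).card
          = 3)).card = (Fintype.card F + 1) / 3) := stmt13' w hw
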